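/- Let M ⊂ ℓ₁ consist of all vectors ∑_{i∈A} 2^i e_i, A ⊂ ℕ finite, with the ℓ₁-metric. If T: M → X is an isometric embedding into a Banach space X with T(0) = 0, then the vectors f_i = 2^{-i} T(2^i e_i) ∈ X are isometrically equivalent to the unit vector basis of ℓ₁: for all n and all scalars c₁,...,c_n, ‖∑_{i=1}^n c_i f_i‖_X = ∑_{i=1}^n |c_i|. In particular, X contains an isometric copy of ℓ₁ whenever it contains an isometric copy of M. -/

import Mathlib

private lemma key16 (S : Finset ℕ) (g : ℕ → ℝ) :
    ‖∑ i ∈ S, lp.single 1 i (g i)‖ = ∑ i ∈ S, |g i| := by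
  have h := lp.norm_sum_single (p := 1) (E := fun _ : ℕ => ℝ) (by norm_num) g S
  simpa [Real.rpow_one] using h

theorem stmt16 {X : Type*} [NormedAddCommGroup X] [NormedSpace ℝ X] [CompleteSpace X]
    (T : lp (fun _ : ℕ => ℝ) 1 → X)
    (hT : ∀ x y : lp (fun _ : ℕ => ℝ) 1,
      (∃ A : Finset ℕ, x = ∑ i ∈ A, (2 : ℝ) ^ i • lp.single 1 i (1 : ℝ)) →
      (∃ A : Finset ℕ, y = ∑ i ∈ A, (2 : ℝ) ^ i • lp.single 1 i (1 : ℝ)) →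
      dist (T x) (T y) = dist x y)
    (hT0 : T 0 = 0) :
    ∀ (n : ℕ) (c : Fin n → ℝ),
      ‖∑ i : Fin n, c i •
          (((2 : ℝ) ^ (i : ℕ))⁻¹ • T ((2 : ℝ) ^ (i : ℕ) • lp.single 1 (i : ℕ) (1 : ℝ)))‖ =
        ∑ i : Fin n, |c i| := by
  -- basic objects
  set e : ℕ → lp (fun _ : ℕ => ℝ) 1 := fun i => (2 : ℝ) ^ i • lp.single 1 i (1 : ℝ) with he_def
  have he : ∀ i : ℕ, e i = lp.single 1 i ((2 : ℝ) ^ i) := by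
    intro i
    rw [he_def]
    rw [show ((2:ℝ)^i) = ((2:ℝ)^i • (1:ℝ)) by simp, lp.single_smul]
  -- membership in M
  have memS : ∀ S : Finset ℕ,
      ∃ A : Finset ℕ, (∑ i ∈ S, e i) = ∑ i ∈ A, (2 : ℝ) ^ i • lp.single 1 i (1 : ℝ) :=
    fun S => ⟨S, rfl⟩
  have mem0 : ∃ A : Finset ℕ, (0 : lp (fun _ : ℕ => ℝ) 1)
      = ∑ i ∈ A, (2 : ℝ) ^ i • lp.single 1 i (1 : ℝ) := ⟨∅, by simp⟩
  -- norms of sums of basis vectors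
  have normS : ∀ S : Finset ℕ, ‖∑ i ∈ S, e i‖ = ∑ i ∈ S, (2 : ℝ) ^ i := by
    intro S
    have : (∑ i ∈ S, e i) = ∑ i ∈ S, lp.single 1 i ((2 : ℝ) ^ i) := by
      exact Finset.sum_congr rfl fun i _ => he i
    rw [this, key16]
    exact Finset.sum_congr rfl fun i _ => abs_of_pos (by positivity)
  -- norm of T at points of M
  have normT : ∀ S : Finset ℕ, ‖T (∑ i ∈ S, e i)‖ = ∑ i ∈ S, (2 : ℝ) ^ i := by
    intro S
    have h := hT _ _ (memS S) mem0
    rw [hT0] at h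
    rw [dist_zero_right, dist_zero_right] at h
    rw [h, normS]
  intro n c
  rcases Nat.eq_zero_or_pos n with hn | hn
  · subst hn; simp
  -- the positive / negative index sets
  set cc : ℕ → ℝ := fun j => if h : j < n then c ⟨j, h⟩ else 0 with hcc
  set A : Finset ℕ := (Finset.range n).filter (fun j => 0 ≤ cc j) with hA
  set B : Finset ℕ := (Finset.range n).filter (fun j => ¬ 0 ≤ cc j) with hB
  have hAB : A ∪ B = Finset.range n := Finset.filter_union_filter_not_eq _ _
  have hdisj : Disjoint A B := Finset.disjoint_filter_filter_not _ _ _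
  set xA : lp (fun _ : ℕ => ℝ) 1 := ∑ i ∈ A, e i with hxA
  set xB : lp (fun _ : ℕ => ℝ) 1 := ∑ i ∈ B, e i with hxB
  -- distance between xA and xB
  have hdist : ‖T xA - T xB‖ = ∑ j ∈ Finset.range n, (2 : ℝ) ^ j := by
    have h := hT _ _ (memS A) (memS B)
    rw [dist_eq_norm, dist_eq_norm] at h
    rw [h]
    have hsub : xA - xB = ∑ j ∈ Finset.range n,
        lp.single 1 j (if 0 ≤ cc j then (2:ℝ)^j else -(2:ℝ)^j) := by
      rw [← hAB, Finset.sum_union hdisj, hxA, hxB, sub_eq_add_neg, ← Finset.sum_neg_distrib]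
      congr 1
      · refine Finset.sum_congr rfl fun j hj => ?_
        rw [he, if_pos (Finset.mem_filter.mp hj).2]
      · refine Finset.sum_congr rfl fun j hj => ?_
        rw [he, if_neg (Finset.mem_filter.mp hj).2, lp.single_neg]
    rw [hsub, key16]
    refine Finset.sum_congr rfl fun j _ => ?_
    split <;> simp [abs_of_pos, abs_of_neg]
  -- the Hahn-Banach functional
  have hTne : T xA - T xB ≠ 0 := by
    intro h
    rw [h, norm_zero] at hdist
    have : (0:ℝ) < ∑ j ∈ Finset.range n, (2 : ℝ) ^ j :=
      Finset.sum_pos (fun j _ => by positivity) ⟨0, Finset.mem_range.mpr hn⟩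
    linarith
  obtain ⟨g, hg1, hgx⟩ := exists_dual_vector ℝ _ (norm_ne_zero_iff.mpr hTne)
  -- g bounds: for any S, |g (T ∑ e)| ≤ ∑ 2^i
  have hgb : ∀ S : Finset ℕ, |g (T (∑ i ∈ S, e i))| ≤ ∑ i ∈ S, (2 : ℝ) ^ i := by
    intro S
    calc |g (T (∑ i ∈ S, e i))| ≤ ‖g‖ * ‖T (∑ i ∈ S, e i)‖ := g.le_opNorm _
    _ = ∑ i ∈ S, (2 : ℝ) ^ i := by rw [hg1, one_mul, normT]
  -- sums over range split
  have hsplit : ∑ j ∈ Finset.range n, (2:ℝ)^j = (∑ j ∈ A, (2:ℝ)^j) + ∑ j ∈ B, (2:ℝ)^j := by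
    rw [← hAB, Finset.sum_union hdisj]
  -- g(T xA) = ‖xA‖, g(T xB) = -‖xB‖
  have hsum : g (T xA) - g (T xB) = (∑ j ∈ A, (2:ℝ)^j) + ∑ j ∈ B, (2:ℝ)^j := by
    rw [← map_sub, hgx, hdist, hsplit]
    norm_num
  have hgA : g (T xA) = ∑ j ∈ A, (2:ℝ)^j := by
    have h1 := abs_le.mp (hgb A)
    have h2 := abs_le.mp (hgb B)
    rw [← hxA] at h1; rw [← hxB] at h2
    linarith [h1.1, h1.2, h2.1, h2.2]
  have hgB : g (T xB) = -(∑ j ∈ B, (2:ℝ)^j) := by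
    have h1 := abs_le.mp (hgb A)
    have h2 := abs_le.mp (hgb B)
    rw [← hxA] at h1; rw [← hxB] at h2
    linarith [h1.1, h1.2, h2.1, h2.2]
  -- single point values
  have hesingle : ∀ i : ℕ, e i = ∑ j ∈ {i}, e j := by simp
  have hgbi : ∀ i : ℕ, |g (T (e i))| ≤ (2:ℝ)^i := by
    intro i
    have := hgb {i}
    simpa using this
  -- distance from e i to xS, i ∈ S
  have hdistS : ∀ (S : Finset ℕ) (i : ℕ), i ∈ S →
      ‖T (∑ j ∈ S, e j) - T (e i)‖ = (∑ j ∈ S, (2:ℝ)^j) - (2:ℝ)^i := by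
    intro S i hi
    have h := hT (∑ j ∈ S, e j) (e i) (memS S) ⟨{i}, by simp [he_def]⟩
    rw [dist_eq_norm, dist_eq_norm] at h
    rw [h]
    have hsub : (∑ j ∈ S, e j) - e i = ∑ j ∈ S.erase i, e j := by
      rw [eq_comm, Finset.sum_erase_eq_sub hi]
    rw [hsub, normS, Finset.sum_erase_eq_sub hi]
  -- values of g on the unit-ish vectors
  have hge : ∀ i : Fin n, g (T (e i)) = (if 0 ≤ c i then (2:ℝ)^(i:ℕ) else -(2:ℝ)^(i:ℕ)) := by
    intro i
    have hcci : cc (i : ℕ) = c i := by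
      rw [hcc]; simp [i.isLt]
    by_cases hc : 0 ≤ c i
    · rw [if_pos hc]
      have hiA : (i : ℕ) ∈ A := by
        rw [hA, Finset.mem_filter]
        exact ⟨Finset.mem_range.mpr i.isLt, by rw [hcci]; exact hc⟩
      have h1 : g (T xA) - g (T (e i)) ≤ (∑ j ∈ A, (2:ℝ)^j) - (2:ℝ)^(i:ℕ) := by
        calc g (T xA) - g (T (e i)) = g (T xA - T (e i)) := by rw [map_sub]
        _ ≤ ‖g‖ * ‖T xA - T (e i)‖ := le_trans (le_abs_self _) (g.le_opNorm _)
        _ = (∑ j ∈ A, (2:ℝ)^j) - (2:ℝ)^(i:ℕ) := by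
            rw [hg1, one_mul, hxA, hdistS A i hiA]
      have h2 := (abs_le.mp (hgbi i)).2
      have h3 := (abs_le.mp (hgbi i)).1
      linarith [hgA]
    · rw [if_neg hc]
      have hiB : (i : ℕ) ∈ B := by
        rw [hB, Finset.mem_filter]
        exact ⟨Finset.mem_range.mpr i.isLt, by rw [hcci]; exact hc⟩
      have h1 : g (T (e i)) - g (T xB) ≤ (∑ j ∈ B, (2:ℝ)^j) - (2:ℝ)^(i:ℕ) := by
        calc g (T (e i)) - g (T xB) = g (T (e i) - T xB) := by rw [map_sub]
        _ ≤ ‖g‖ * ‖T (e i) - T xB‖ := le_trans (le_abs_self _) (g.le_opNorm _)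
        _ = (∑ j ∈ B, (2:ℝ)^j) - (2:ℝ)^(i:ℕ) := by
            rw [hg1, one_mul, hxB, ← norm_neg, neg_sub, hdistS B i hiB]
      have h3 := (abs_le.mp (hgbi i)).1
      linarith [hgB]
  -- the vector in question
  set v : X := ∑ i : Fin n, c i • (((2 : ℝ) ^ (i : ℕ))⁻¹ • T (e i)) with hv
  have hpow : ∀ i : Fin n, ((2:ℝ)^(i:ℕ))⁻¹ * (2:ℝ)^(i:ℕ) = 1 := fun i => by
    rw [inv_mul_cancel₀ (by positivity)]
  -- upper bound
  have hub : ‖v‖ ≤ ∑ i : Fin n, |c i| := by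
    calc ‖v‖ ≤ ∑ i : Fin n, ‖c i • (((2 : ℝ) ^ (i : ℕ))⁻¹ • T (e i))‖ := norm_sum_le _ _
    _ = ∑ i : Fin n, |c i| := by
        refine Finset.sum_congr rfl fun i _ => ?_
        rw [norm_smul, norm_smul, Real.norm_eq_abs, Real.norm_eq_abs,
          abs_of_pos (show (0:ℝ) < ((2:ℝ)^(i:ℕ))⁻¹ by positivity)]
        have : ‖T (e i)‖ = (2:ℝ)^(i:ℕ) := by
          rw [hesingle (i:ℕ), normT]; simp
        rw [this, hpow i, mul_one]
  -- lower bound via g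
  have hgv : g v = ∑ i : Fin n, |c i| := by
    rw [hv, map_sum]
    refine Finset.sum_congr rfl fun i _ => ?_
    rw [map_smul, map_smul, hge i]
    by_cases hc : 0 ≤ c i
    · rw [if_pos hc]
      simp only [smul_eq_mul]
      rw [hpow i, mul_one, abs_of_nonneg hc]
    · rw [if_neg hc]
      simp only [smul_eq_mul, mul_neg]
      rw [hpow i, mul_one, abs_of_neg (lt_of_not_ge hc)]
  have hlb : ∑ i : Fin n, |c i| ≤ ‖v‖ := by
    calc ∑ i : Fin n, |c i| = g v := hgv.symm
    _ ≤ ‖g‖ * ‖v‖ := le_trans (le_abs_self _) (g.le_opNorm _)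
    _ = ‖v‖ := by rw [hg1, one_mul]
  exact le_antisymm hub hlb
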